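/- Let 𝔤 be a Lie algebra with symmetric invariant bilinear form, Γ ⊆ Aut(𝔤,⟨·,·⟩) with the finiteness conditions, φ: Γ → ℂˣ a group homomorphism, and H = ker φ. Then the generalized twisted affine Lie algebra ĝ[Γ] (the quotient of ĝ by span{φ(g)ᵐ(g·a⊗tᵐ) − a⊗tᵐ} with bracket [a⊗tᵐ, b⊗tⁿ]_Γ = Σ_{g∈Γ} φ(g)ᵐ([g·a,b]⊗t^{m+n} + m⟨g·a,b⟩δ_{m+n,0}k)) is isomorphic as a Lie algebra to the algebra (𝔤/H)̂[Γ/H] constructed from the quotient Lie algebra 𝔤/H (with bracket [u,v]_H = Σ_{h∈H}[h·u,v] and form ⟨u,v⟩_H = Σ_{h∈H}⟨h·u,v⟩) and the induced injective homomorphism Γ/H → ℂˣ. -/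

import Mathlib

open scoped BigOperators

/-- The affine Lie algebra bracket on `ĝ = (𝔤 ⊗ ℂ[t,t⁻¹]) ⊕ ℂk`, modelled on
`(ℤ →₀ α) × ℂ`, for a coefficient space `α` with bracket `br` and form `Bf`. -/
noncomputable def affBrF {α : Type*} [AddCommGroup α] [Module ℂ α]
    (br : α → α → α) (Bf : α → α → ℂ)
    (x y : (ℤ →₀ α) × ℂ) : (ℤ →₀ α) × ℂ :=
  (∑ m ∈ x.1.support, ∑ n ∈ y.1.support, Finsupp.single (m + n) (br (x.1 m) (y.1 n)),
   ∑ m ∈ x.1.support, (m : ℂ) * Bf (x.1 m) (y.1 (-m)))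

/-- The twisted action `g·(a⊗tᵐ + βk) = cᵐ(ρ a ⊗ tᵐ) + βk` on `ĝ`, where `ρ` is the
action on the coefficient space and `c = φ(g)`. -/
noncomputable def affActF {α : Type*} [AddCommGroup α] [Module ℂ α]
    (ρ : α →ₗ[ℂ] α) (c : ℂˣ) (x : (ℤ →₀ α) × ℂ) : (ℤ →₀ α) × ℂ :=
  (x.1.sum fun m v => Finsupp.single m (((c ^ m : ℂˣ) : ℂ) • ρ v), x.2)

section Aux

variable {α : Type*} [AddCommGroup α] [Module ℂ α]

lemma affActF_fst_apply (ρ : α →ₗ[ℂ] α) (c : ℂˣ) (x : (ℤ →₀ α) × ℂ) (m : ℤ) :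
    (affActF ρ c x).1 m = ((c ^ m : ℂˣ) : ℂ) • ρ (x.1 m) := by
  classical
  show (x.1.sum fun k v => Finsupp.single k (((c ^ k : ℂˣ) : ℂ) • ρ v)) m = _
  rw [Finsupp.sum_apply, Finsupp.sum, Finset.sum_eq_single m]
  · rw [Finsupp.single_eq_same]
  · intro i _ hne
    exact Finsupp.single_eq_of_ne' hne
  · intro hm
    rw [Finsupp.notMem_support_iff.mp hm]
    simp

lemma affActF_support (ρ : α →ₗ[ℂ] α) (c : ℂˣ) (x : (ℤ →₀ α) × ℂ) :
    (affActF ρ c x).1.support ⊆ x.1.support := by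
  intro m hm
  rw [Finsupp.mem_support_iff] at hm ⊢
  intro h0
  apply hm
  rw [affActF_fst_apply, h0, map_zero, smul_zero]

lemma affActF_snd (ρ : α →ₗ[ℂ] α) (c : ℂˣ) (x : (ℤ →₀ α) × ℂ) :
    (affActF ρ c x).2 = x.2 := rfl

lemma affBrF_eq (br : α → α → α) (Bf : α → α → ℂ)
    (hbr0 : ∀ a, br a 0 = 0) (h0br : ∀ b, br 0 b = 0)
    (hB0 : ∀ a, Bf a 0 = 0) (h0B : ∀ b, Bf 0 b = 0)
    (x y : (ℤ →₀ α) × ℂ) (sx sy : Finset ℤ)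
    (hx : x.1.support ⊆ sx) (hy : y.1.support ⊆ sy) :
    affBrF br Bf x y =
      (∑ m ∈ sx, ∑ n ∈ sy, Finsupp.single (m + n) (br (x.1 m) (y.1 n)),
       ∑ m ∈ sx, (m : ℂ) * Bf (x.1 m) (y.1 (-m))) := by
  rw [affBrF]
  refine Prod.ext ?_ ?_
  · show (∑ m ∈ x.1.support, ∑ n ∈ y.1.support, Finsupp.single (m + n) (br (x.1 m) (y.1 n))) = _
    rw [Finset.sum_subset hx (fun m _ hm => Finset.sum_eq_zero fun n _ => by
      rw [Finsupp.notMem_support_iff.mp hm, h0br, Finsupp.single_zero])]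
    exact Finset.sum_congr rfl fun m _ => Finset.sum_subset hy fun n _ hn => by
      rw [Finsupp.notMem_support_iff.mp hn, hbr0, Finsupp.single_zero]
  · show (∑ m ∈ x.1.support, (m : ℂ) * Bf (x.1 m) (y.1 (-m))) = _
    exact Finset.sum_subset hx fun m _ hm => by
      rw [Finsupp.notMem_support_iff.mp hm, h0B, mul_zero]

lemma mapRange_finset_sum {β M N ι : Type*} [AddCommMonoid M] [AddCommMonoid N]
    (f : M → N) (h0 : f 0 = 0) (hadd : ∀ a b, f (a + b) = f a + f b)
    (s : Finset ι) (g : ι → β →₀ M) :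
    Finsupp.mapRange f h0 (∑ i ∈ s, g i) = ∑ i ∈ s, Finsupp.mapRange f h0 (g i) := by
  classical
  induction s using Finset.cons_induction with
  | empty => simp
  | cons a s ha ih => rw [Finset.sum_cons, Finset.sum_cons, Finsupp.mapRange_add hadd, ih]

lemma finsum_prod_mk {ι M N : Type*} [AddCommMonoid M] [AddCommMonoid N]
    (f : ι → M) (g : ι → N) (hf : (Function.support f).Finite)
    (hg : (Function.support g).Finite) :
    ∑ᶠ i, (f i, g i) = (∑ᶠ i, f i, ∑ᶠ i, g i) := by
  have hfg : (Function.support fun i => ((f i, g i) : M × N)).Finite := by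
    apply (hf.union hg).subset
    intro i hi
    rw [Function.mem_support] at hi
    by_contra hC
    simp only [Set.mem_union, Function.mem_support, not_or, not_not] at hC
    exact hi (by rw [Prod.ext_iff]; exact ⟨hC.1, hC.2⟩)
  refine Prod.ext ?_ ?_
  · have := (AddMonoidHom.fst M N).map_finsum hfg
    simpa using this
  · have := (AddMonoidHom.snd M N).map_finsum hfg
    simpa using this

end Aux

/-- `ĝ[Γ] ≅ (𝔤/H)̂[Γ/H]` where `H = ker φ`.  Here `ĝ[Γ]` is the quotient
of `ĝ` by the span of `g·x − x` (with the averaged bracket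
`[x,y]_Γ = ∑ᶠ g, [g·x, y]`), `𝔤/H` is the quotient Lie algebra with bracket
`[u,v]_H = ∑_{h∈H}[h·u,v]` and form `⟨u,v⟩_H = ∑_{h∈H}⟨h·u,v⟩`, and `Γ/H` acts on it
with the induced injective homomorphism `Γ/H → ℂˣ`.  The natural map is a linear
isomorphism of the two quotients intertwining the averaged brackets. -/
theorem generalized_twisted_affine_iso_quotient_construction
    {𝔤 : Type*} [LieRing 𝔤] [LieAlgebra ℂ 𝔤]
    {Γ : Type*} [Group Γ] (σ : Γ → 𝔤 →ₗ[ℂ] 𝔤) (φ : Γ →* ℂˣ)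
    (B : 𝔤 →ₗ[ℂ] 𝔤 →ₗ[ℂ] ℂ)
    (hone : σ 1 = LinearMap.id)
    (hmul : ∀ g h : Γ, σ (g * h) = (σ g).comp (σ h))
    (hbr : ∀ (g : Γ) (a b : 𝔤), σ g ⁅a, b⁆ = ⁅σ g a, σ g b⁆)
    (hsym : ∀ a b : 𝔤, B a b = B b a)
    (hinv : ∀ a b c : 𝔤, B ⁅a, b⁆ c = B a ⁅b, c⁆)
    (hpres : ∀ (g : Γ) (a b : 𝔤), B (σ g a) (σ g b) = B a b)
    (hfin : ∀ a b : 𝔤, {g : Γ | ⁅σ g a, b⁆ ≠ 0 ∨ B (σ g a) b ≠ 0}.Finite)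
    -- the subspace of 𝔤 spanned by h·u − u for h ∈ H = ker φ
    (J : Submodule ℂ 𝔤)
    (hJ : J = Submodule.span ℂ {x : 𝔤 | ∃ h : Γ, φ h = 1 ∧ ∃ u : 𝔤, x = σ h u - u})
    -- the induced action of Γ/H on 𝔤/H
    (σbar : (Γ ⧸ φ.ker) → (𝔤 ⧸ J) →ₗ[ℂ] (𝔤 ⧸ J))
    (hσbar : ∀ (g : Γ) (u : 𝔤),
        σbar (QuotientGroup.mk g) (J.mkQ u) = J.mkQ (σ g u))
    -- the averaged bracket and form of 𝔤/H
    (brbar : (𝔤 ⧸ J) → (𝔤 ⧸ J) → (𝔤 ⧸ J))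
    (hbrbar : ∀ u v : 𝔤,
        brbar (J.mkQ u) (J.mkQ v) = J.mkQ (∑ᶠ h : φ.ker, ⁅σ (h : Γ) u, v⁆))
    (Bbar : (𝔤 ⧸ J) → (𝔤 ⧸ J) → ℂ)
    (hBbar : ∀ u v : 𝔤,
        Bbar (J.mkQ u) (J.mkQ v) = ∑ᶠ h : φ.ker, B (σ (h : Γ) u) v) :
    ∃ e : (((ℤ →₀ 𝔤) × ℂ) ⧸ Submodule.span ℂ
            {z : (ℤ →₀ 𝔤) × ℂ | ∃ (g : Γ) (w : (ℤ →₀ 𝔤) × ℂ),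
              z = affActF (σ g) (φ g) w - w})
          ≃ₗ[ℂ]
          (((ℤ →₀ (𝔤 ⧸ J)) × ℂ) ⧸ Submodule.span ℂ
            {z : (ℤ →₀ (𝔤 ⧸ J)) × ℂ | ∃ (q : Γ ⧸ φ.ker) (w : (ℤ →₀ (𝔤 ⧸ J)) × ℂ),
              z = affActF (σbar q) (QuotientGroup.kerLift φ q) w - w}),
      (∀ x : (ℤ →₀ 𝔤) × ℂ,
          e (Submodule.Quotient.mk x)
            = Submodule.Quotient.mk
                (x.1.mapRange (⇑J.mkQ) (map_zero J.mkQ), x.2)) ∧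
      (∀ x y : (ℤ →₀ 𝔤) × ℂ,
          e (Submodule.Quotient.mk
              (∑ᶠ g : Γ, affBrF (fun a b => ⁅a, b⁆) (fun a b => B a b)
                (affActF (σ g) (φ g) x) y))
            = Submodule.Quotient.mk
                (∑ᶠ q : Γ ⧸ φ.ker, affBrF brbar Bbar
                  (affActF (σbar q) (QuotientGroup.kerLift φ q)
                    (x.1.mapRange (⇑J.mkQ) (map_zero J.mkQ), x.2))
                  (y.1.mapRange (⇑J.mkQ) (map_zero J.mkQ), y.2))) := by
  classical
  -- the natural linear map downstairs
  let F : ((ℤ →₀ 𝔤) × ℂ) →ₗ[ℂ] ((ℤ →₀ (𝔤 ⧸ J)) × ℂ) :=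
    { toFun := fun z => (z.1.mapRange (⇑J.mkQ) (map_zero J.mkQ), z.2)
      map_add' := fun a b => by
        refine Prod.ext ?_ rfl
        show Finsupp.mapRange (⇑J.mkQ) (map_zero J.mkQ) (a.1 + b.1)
            = Finsupp.mapRange (⇑J.mkQ) (map_zero J.mkQ) a.1
              + Finsupp.mapRange (⇑J.mkQ) (map_zero J.mkQ) b.1
        exact Finsupp.mapRange_add (fun u v => map_add J.mkQ u v) _ _
      map_smul' := fun c a => by
        refine Prod.ext ?_ rfl
        show Finsupp.mapRange (⇑J.mkQ) (map_zero J.mkQ) (c • a.1)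
            = c • Finsupp.mapRange (⇑J.mkQ) (map_zero J.mkQ) a.1
        exact Finsupp.mapRange_smul c a.1 (fun u => map_smul J.mkQ c u) }
  have hF : ∀ z : (ℤ →₀ 𝔤) × ℂ,
      F z = (z.1.mapRange (⇑J.mkQ) (map_zero J.mkQ), z.2) := fun z => rfl
  have hFfst : ∀ (z : (ℤ →₀ 𝔤) × ℂ) (m : ℤ), (F z).1 m = J.mkQ (z.1 m) :=
    fun z m => Finsupp.mapRange_apply (hf := map_zero J.mkQ)
  have hFsupp : ∀ z : (ℤ →₀ 𝔤) × ℂ, (F z).1.support ⊆ z.1.support :=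
    fun z => Finsupp.support_mapRange (f := ⇑J.mkQ) (hf := map_zero J.mkQ) (g := z.1)
  -- a section of mkQ
  let sec : (𝔤 ⧸ J) → 𝔤 := fun v =>
    if v = 0 then 0 else Function.surjInv J.mkQ_surjective v
  have hsec : ∀ v, J.mkQ (sec v) = v := by
    intro v
    by_cases h : v = 0 <;>
      simp [sec, h, Function.surjInv_eq J.mkQ_surjective]
  have hsec0 : sec 0 = 0 := by simp [sec]
  have hFsurj : Function.Surjective F := by
    intro w
    refine ⟨(w.1.mapRange sec hsec0, w.2), ?_⟩
    rw [hF]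
    refine Prod.ext ?_ rfl
    ext m
    rw [Finsupp.mapRange_apply (hf := map_zero J.mkQ),
      Finsupp.mapRange_apply (hf := hsec0), hsec]
  -- F intertwines the actions
  have hcomm : ∀ (g : Γ) (w : (ℤ →₀ 𝔤) × ℂ),
      F (affActF (σ g) (φ g) w)
        = affActF (σbar (QuotientGroup.mk g))
            (QuotientGroup.kerLift φ (QuotientGroup.mk g)) (F w) := by
    intro g w
    refine Prod.ext ?_ rfl
    ext m
    rw [hFfst, affActF_fst_apply, affActF_fst_apply, hFfst,
      map_smul, QuotientGroup.kerLift_mk, hσbar]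
  set S : Set ((ℤ →₀ 𝔤) × ℂ) :=
    {z : (ℤ →₀ 𝔤) × ℂ | ∃ (g : Γ) (w : (ℤ →₀ 𝔤) × ℂ),
      z = affActF (σ g) (φ g) w - w} with hSdef
  set S' : Set ((ℤ →₀ (𝔤 ⧸ J)) × ℂ) :=
    {z : (ℤ →₀ (𝔤 ⧸ J)) × ℂ | ∃ (q : Γ ⧸ φ.ker) (w : (ℤ →₀ (𝔤 ⧸ J)) × ℂ),
      z = affActF (σbar q) (QuotientGroup.kerLift φ q) w - w} with hS'def
  have himg : F '' S = S' := by
    apply Set.Subset.antisymm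
    · rintro _ ⟨z, ⟨g, w, rfl⟩, rfl⟩
      exact ⟨QuotientGroup.mk g, F w, by rw [map_sub, hcomm]⟩
    · rintro z ⟨q, w', rfl⟩
      obtain ⟨w, rfl⟩ := hFsurj w'
      obtain ⟨g, rfl⟩ : ∃ g : Γ, QuotientGroup.mk g = q :=
        ⟨q.out, QuotientGroup.out_eq' q⟩
      exact ⟨affActF (σ g) (φ g) w - w, ⟨g, w, rfl⟩, by rw [map_sub, hcomm]⟩
  have hmapspan : Submodule.map F (Submodule.span ℂ S) = Submodule.span ℂ S' := by
    rw [Submodule.map_span, himg]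
  have hkerF : LinearMap.ker F ≤ Submodule.span ℂ S := by
    intro z hz
    rw [LinearMap.mem_ker] at hz
    have h2 : z.2 = 0 := congrArg Prod.snd hz
    have hzJ : ∀ m : ℤ, z.1 m ∈ J := by
      intro m
      have h1 : J.mkQ (z.1 m) = 0 := by
        rw [← hFfst z m, hz]; rfl
      rwa [Submodule.mkQ_apply, Submodule.Quotient.mk_eq_zero] at h1
    have hrepr : z = ∑ m ∈ z.1.support,
        ((Finsupp.single m (z.1 m) : ℤ →₀ 𝔤), (0 : ℂ)) := by
      refine Prod.ext ?_ ?_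
      · have h := map_sum (AddMonoidHom.fst (ℤ →₀ 𝔤) ℂ)
          (fun m => ((Finsupp.single m (z.1 m) : ℤ →₀ 𝔤), (0 : ℂ))) z.1.support
        simp only [AddMonoidHom.coe_fst] at h
        rw [h]
        exact (Finsupp.sum_single z.1).symm
      · have h := map_sum (AddMonoidHom.snd (ℤ →₀ 𝔤) ℂ)
          (fun m => ((Finsupp.single m (z.1 m) : ℤ →₀ 𝔤), (0 : ℂ))) z.1.support
        simp only [AddMonoidHom.coe_snd] at h
        rw [h2, h]
        simp
    rw [hrepr]
    refine Submodule.sum_mem _ fun m _ => ?_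
    have hL : J ≤ Submodule.comap
        (LinearMap.prod (Finsupp.lsingle (R := ℂ) m) (0 : 𝔤 →ₗ[ℂ] ℂ))
        (Submodule.span ℂ S) := by
      rw [hJ, Submodule.span_le]
      rintro _ ⟨h, hφh, u, rfl⟩
      simp only [SetLike.mem_coe, Submodule.mem_comap, LinearMap.prod_apply,
        Pi.prod, Finsupp.lsingle_apply, LinearMap.zero_apply]
      apply Submodule.subset_span
      refine ⟨h, (Finsupp.single m u, 0), ?_⟩
      have hact : affActF (σ h) (φ h) ((Finsupp.single m u : ℤ →₀ 𝔤), (0 : ℂ))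
          = (Finsupp.single m (σ h u), 0) := by
        refine Prod.ext ?_ rfl
        ext m'
        rw [affActF_fst_apply, hφh]
        simp only [one_zpow, Units.val_one, one_smul]
        by_cases hmm : m = m'
        · subst hmm; simp
        · simp [Finsupp.single_eq_of_ne' hmm, Finsupp.single_eq_of_ne' hmm]
      rw [hact]
      refine Prod.ext ?_ ?_
      · show Finsupp.single m (σ h u - u)
          = (Finsupp.single m (σ h u) - Finsupp.single m u : ℤ →₀ 𝔤)
        rw [Finsupp.single_sub]
      · show (0 : ℂ) = 0 - 0
        rw [sub_zero]
    exact hL (hzJ m)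
  have hker : LinearMap.ker ((Submodule.span ℂ S').mkQ ∘ₗ F) = Submodule.span ℂ S := by
    ext z
    rw [LinearMap.mem_ker, LinearMap.comp_apply, Submodule.mkQ_apply,
      Submodule.Quotient.mk_eq_zero]
    constructor
    · intro hz
      rw [← hmapspan] at hz
      obtain ⟨w, hw, hFw⟩ := Submodule.mem_map.mp hz
      have hzw : z - w ∈ LinearMap.ker F := by
        rw [LinearMap.mem_ker, map_sub, hFw, sub_self]
      have : z = w + (z - w) := by abel
      rw [this]
      exact Submodule.add_mem _ hw (hkerF hzw)
    · intro hz
      rw [← hmapspan]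
      exact Submodule.mem_map_of_mem hz
  let L := (Submodule.span ℂ S).liftQ ((Submodule.span ℂ S').mkQ ∘ₗ F) (le_of_eq hker.symm)
  have hLinj : Function.Injective L :=
    LinearMap.ker_eq_bot.mp
      (Submodule.ker_liftQ_eq_bot _ _ _ (le_of_eq hker))
  have hLsurj : Function.Surjective L := by
    intro w
    obtain ⟨w', rfl⟩ := (Submodule.span ℂ S').mkQ_surjective w
    obtain ⟨z, rfl⟩ := hFsurj w'
    exact ⟨Submodule.Quotient.mk z, Submodule.liftQ_apply _ _ _⟩
  refine ⟨LinearEquiv.ofBijective L ⟨hLinj, hLsurj⟩, ?_, ?_⟩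
  · intro x
    change L (Submodule.Quotient.mk x) = _
    rw [Submodule.liftQ_apply, LinearMap.comp_apply,
      Submodule.mkQ_apply, hF]
  · intro x y
    have he : ∀ z : (ℤ →₀ 𝔤) × ℂ,
        (LinearEquiv.ofBijective L ⟨hLinj, hLsurj⟩) (Submodule.Quotient.mk z)
          = Submodule.Quotient.mk (F z) := fun z => by
      change L _ = _; rw [Submodule.liftQ_apply]; rfl
    rw [he]
    refine congrArg _ ?_
    -- it suffices to prove the identity upstairs
    set fg : Γ → (ℤ →₀ 𝔤) × ℂ := fun g =>
      affBrF (fun a b => ⁅a, b⁆) (fun a b => B a b) (affActF (σ g) (φ g) x) y with hfg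
    -- global finiteness of the support over Γ
    have hTfin : (Function.support fg).Finite := by
      have hU : (⋃ p ∈ ((x.1.support ×ˢ (y.1.support ∪ x.1.support.image (fun m => -m))) :
            Finset (ℤ × ℤ)),
          {g : Γ | ⁅σ g (x.1 p.1), y.1 p.2⁆ ≠ 0 ∨ B (σ g (x.1 p.1)) (y.1 p.2) ≠ 0}).Finite :=
        Set.Finite.biUnion (Finset.finite_toSet _) fun p _ => hfin _ _
      apply hU.subset
      intro g hg
      rw [Function.mem_support] at hg
      by_contra hgU
      apply hg
      simp only [Set.mem_iUnion, not_exists, Set.mem_setOf_eq, not_or, not_not] at hgU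
      rw [hfg]
      simp only
      rw [affBrF_eq _ _ (fun a => lie_zero a) (fun b => zero_lie b)
        (fun a => map_zero (B a)) (fun b => by simp) _ _ x.1.support
        (y.1.support ∪ x.1.support.image (fun m => -m))
        (affActF_support _ _ _) Finset.subset_union_left]
      refine Prod.ext ?_ ?_
      · refine Finset.sum_eq_zero fun m hm => Finset.sum_eq_zero fun n hn => ?_
        have hp := hgU (m, n) (Finset.mem_product.mpr ⟨hm, hn⟩)
        rw [affActF_fst_apply, smul_lie, hp.1, smul_zero, Finsupp.single_zero]
      · refine Finset.sum_eq_zero fun m hm => ?_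
        have hmem : (-m) ∈ y.1.support ∪ x.1.support.image (fun m => -m) :=
          Finset.mem_union_right _ (Finset.mem_image.mpr ⟨m, hm, rfl⟩)
        have hp := hgU (m, -m) (Finset.mem_product.mpr ⟨hm, hmem⟩)
        rw [affActF_fst_apply, map_smul, LinearMap.smul_apply, hp.2, smul_zero, mul_zero]
    -- finiteness over H = ker φ
    have hfinH : ∀ a b : 𝔤,
        ({h : φ.ker | ⁅σ (h : Γ) a, b⁆ ≠ 0 ∨ B (σ (h : Γ) a) b ≠ 0}).Finite := by
      intro a b
      exact Set.Finite.preimage Subtype.coe_injective.injOn (hfin a b)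
    have hfinH1 : ∀ a b : 𝔤, (Function.support fun h : φ.ker => ⁅σ (h : Γ) a, b⁆).Finite :=
      fun a b => (hfinH a b).subset fun h hh => Or.inl hh
    have hfinH2 : ∀ a b : 𝔤,
        (Function.support fun h : φ.ker => B (σ (h : Γ) a) b).Finite :=
      fun a b => (hfinH a b).subset fun h hh => Or.inr hh
    -- zero laws for brbar and Bbar
    have hbr0' : ∀ v, brbar v 0 = 0 := by
      intro v
      obtain ⟨u, rfl⟩ := J.mkQ_surjective v
      rw [show (0 : 𝔤 ⧸ J) = J.mkQ 0 from (map_zero _).symm, hbrbar]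
      simp
    have h0br' : ∀ v, brbar 0 v = 0 := by
      intro v
      obtain ⟨u, rfl⟩ := J.mkQ_surjective v
      rw [show (0 : 𝔤 ⧸ J) = J.mkQ 0 from (map_zero _).symm, hbrbar]
      simp
    have hB0' : ∀ v, Bbar v 0 = 0 := by
      intro v
      obtain ⟨u, rfl⟩ := J.mkQ_surjective v
      rw [show (0 : 𝔤 ⧸ J) = J.mkQ 0 from (map_zero _).symm, hBbar]
      simp
    have h0B' : ∀ v, Bbar 0 v = 0 := by
      intro v
      obtain ⟨u, rfl⟩ := J.mkQ_surjective v
      rw [show (0 : 𝔤 ⧸ J) = J.mkQ 0 from (map_zero _).symm, hBbar]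
      simp
    -- scalar pulls
    have hbrbar_smul : ∀ (t : ℂ) (u v : 𝔤),
        brbar (t • J.mkQ u) (J.mkQ v) = t • brbar (J.mkQ u) (J.mkQ v) := by
      intro t u v
      rw [← map_smul J.mkQ t u, hbrbar, hbrbar, ← map_smul J.mkQ t]
      congr 1
      have hfun : (fun h : φ.ker => ⁅σ (h : Γ) (t • u), v⁆)
          = fun h : φ.ker => t • ⁅σ (h : Γ) u, v⁆ :=
        funext fun h => by rw [map_smul, smul_lie]
      rw [hfun]
      exact (smul_finsum' t (hfinH1 u v)).symm
    have hBbar_smul : ∀ (t : ℂ) (u v : 𝔤),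
        Bbar (t • J.mkQ u) (J.mkQ v) = t * Bbar (J.mkQ u) (J.mkQ v) := by
      intro t u v
      rw [← map_smul J.mkQ t u, hBbar, hBbar, mul_finsum' _ t (hfinH2 u v)]
      exact finsum_congr fun h => by
        rw [map_smul (σ (h : Γ)), map_smul B, LinearMap.smul_apply, smul_eq_mul]
    -- the coset-decomposition equivalence
    have hmemH : ∀ g : Γ, g * ((QuotientGroup.mk g : Γ ⧸ φ.ker).out)⁻¹ ∈ φ.ker := by
      intro g
      have h1 : (QuotientGroup.mk ((QuotientGroup.mk g : Γ ⧸ φ.ker).out) : Γ ⧸ φ.ker)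
          = QuotientGroup.mk g := QuotientGroup.out_eq' _
      have h2 := QuotientGroup.eq.mp h1
      rw [MonoidHom.mem_ker] at h2 ⊢
      rw [map_mul, map_inv] at h2 ⊢
      rw [inv_mul_eq_one] at h2
      rw [mul_inv_eq_one]
      exact h2.symm
    let E : (Γ ⧸ φ.ker) × φ.ker ≃ Γ :=
      { toFun := fun p => (p.2 : Γ) * p.1.out
        invFun := fun g => (QuotientGroup.mk g,
          ⟨g * ((QuotientGroup.mk g : Γ ⧸ φ.ker).out)⁻¹, hmemH g⟩)
        left_inv := by
          rintro ⟨q, h⟩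
          have h1 : (QuotientGroup.mk ((h : Γ) * q.out) : Γ ⧸ φ.ker) = q := by
            rw [QuotientGroup.mk_mul, (QuotientGroup.eq_one_iff (h : Γ)).mpr h.2,
              one_mul, QuotientGroup.out_eq']
          refine Prod.ext h1 (Subtype.ext ?_)
          show (h : Γ) * q.out
              * ((QuotientGroup.mk ((h : Γ) * q.out) : Γ ⧸ φ.ker).out)⁻¹ = (h : Γ)
          rw [h1, mul_inv_cancel_right]
        right_inv := fun g => by
          show g * ((QuotientGroup.mk g : Γ ⧸ φ.ker).out)⁻¹
              * (QuotientGroup.mk g : Γ ⧸ φ.ker).out = g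
          rw [inv_mul_cancel_right] }
    -- key per-coset computation
    have key : ∀ q : Γ ⧸ φ.ker,
        (∑ᶠ h : φ.ker, F (fg ((h : Γ) * q.out)))
          = affBrF brbar Bbar
              (affActF (σbar q) (QuotientGroup.kerLift φ q) (F x)) (F y) := by
      intro q
      set g₀ := q.out with hg₀
      have hq : (QuotientGroup.mk g₀ : Γ ⧸ φ.ker) = q := QuotientGroup.out_eq' q
      have hφh : ∀ h : φ.ker, φ ((h : Γ) * g₀) = φ g₀ := fun h => by
        rw [map_mul, (MonoidHom.mem_ker).mp h.2, one_mul]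
      have hσh : ∀ (h : φ.ker) (a : 𝔤), σ ((h : Γ) * g₀) a = σ (h : Γ) (σ g₀ a) :=
        fun h a => by rw [hmul]; rfl
      have hkl : QuotientGroup.kerLift φ q = φ g₀ := by
        rw [← hq, QuotientGroup.kerLift_mk]
      -- rewrite each summand in closed form
      have hterm : ∀ h : φ.ker, F (fg ((h : Γ) * g₀)) =
          (∑ m ∈ x.1.support, ∑ n ∈ y.1.support, Finsupp.single (m + n)
              (((φ g₀ ^ m : ℂˣ) : ℂ) • J.mkQ ⁅σ (h : Γ) (σ g₀ (x.1 m)), y.1 n⁆),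
           ∑ m ∈ x.1.support, ((m : ℂ) * ((φ g₀ ^ m : ℂˣ) : ℂ))
              * B (σ (h : Γ) (σ g₀ (x.1 m))) (y.1 (-m))) := by
        intro h
        rw [hfg]
        simp only
        rw [affBrF_eq _ _ (fun a => lie_zero a) (fun b => zero_lie b)
          (fun a => map_zero (B a)) (fun b => by simp) _ _ x.1.support y.1.support
          (affActF_support _ _ _) subset_rfl]
        rw [hF]
        refine Prod.ext ?_ ?_
        · show Finsupp.mapRange (⇑J.mkQ) (map_zero J.mkQ)
              (∑ m ∈ x.1.support, ∑ n ∈ y.1.support, Finsupp.single (m + n)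
                ⁅(affActF (σ ((h : Γ) * g₀)) (φ ((h : Γ) * g₀)) x).1 m, y.1 n⁆) = _
          rw [mapRange_finset_sum _ _ (fun a b => map_add J.mkQ a b)]
          refine Finset.sum_congr rfl fun m hm => ?_
          rw [mapRange_finset_sum _ _ (fun a b => map_add J.mkQ a b)]
          refine Finset.sum_congr rfl fun n hn => ?_
          rw [Finsupp.mapRange_single]
          rw [affActF_fst_apply, hφh h, hσh h, smul_lie, map_smul]
        · show (∑ m ∈ x.1.support,
              (m : ℂ) * B ((affActF (σ ((h : Γ) * g₀)) (φ ((h : Γ) * g₀)) x).1 m)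
                (y.1 (-m))) = _
          refine Finset.sum_congr rfl fun m hm => ?_
          rw [affActF_fst_apply, hφh h, hσh h, map_smul, LinearMap.smul_apply,
            smul_eq_mul, ← mul_assoc]
      -- evaluate the inner finsum in closed form
      have hkey1 : ∀ (k : ℤ) (c : ℂ) (a b : 𝔤),
          (∑ᶠ h : φ.ker, Finsupp.single k (c • J.mkQ ⁅σ (h : Γ) a, b⁆))
            = Finsupp.single k (c • brbar (J.mkQ a) (J.mkQ b)) := by
        intro k c a b
        have hs0 : (Function.support fun h : φ.ker => J.mkQ ⁅σ (h : Γ) a, b⁆).Finite := by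
          apply (hfinH1 a b).subset
          intro h hh
          rw [Function.mem_support] at hh ⊢
          intro h0; apply hh; rw [h0, map_zero]
        have hs1 : (Function.support fun h : φ.ker => c • J.mkQ ⁅σ (h : Γ) a, b⁆).Finite := by
          apply hs0.subset
          intro h hh
          rw [Function.mem_support] at hh ⊢
          intro h0; apply hh; rw [h0, smul_zero]
        have e1 := (Finsupp.singleAddHom (M := 𝔤 ⧸ J) k).map_finsum hs1
        simp only [Finsupp.singleAddHom_apply] at e1
        rw [← e1]
        congr 1
        have e2 := (J.mkQ.toAddMonoidHom).map_finsum
          (f := fun h : φ.ker => ⁅σ (h : Γ) a, b⁆) (hfinH1 a b)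
        simp only [LinearMap.toAddMonoidHom_coe] at e2
        rw [← smul_finsum' c hs0, hbrbar, e2]
      have hkey2 : ∀ (c : ℂ) (a b : 𝔤),
          (∑ᶠ h : φ.ker, c * B (σ (h : Γ) a) b) = c * Bbar (J.mkQ a) (J.mkQ b) := by
        intro c a b
        rw [hBbar, mul_finsum' _ c (hfinH2 a b)]
      -- per-(m) finiteness for the double-sum swap
      have hsupfst : ∀ m n : ℤ, (Function.support fun h : φ.ker =>
          Finsupp.single (m + n)
            (((φ g₀ ^ m : ℂˣ) : ℂ) • J.mkQ ⁅σ (h : Γ) (σ g₀ (x.1 m)), y.1 n⁆)).Finite := by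
        intro m n
        apply (hfinH1 (σ g₀ (x.1 m)) (y.1 n)).subset
        intro h hh
        rw [Function.mem_support] at hh ⊢
        intro h0; apply hh; rw [h0, map_zero, smul_zero, Finsupp.single_zero]
      have hsupfstm : ∀ m : ℤ, (Function.support fun h : φ.ker =>
          ∑ n ∈ y.1.support, Finsupp.single (m + n)
            (((φ g₀ ^ m : ℂˣ) : ℂ) • J.mkQ ⁅σ (h : Γ) (σ g₀ (x.1 m)), y.1 n⁆)).Finite := by
        intro m
        apply Set.Finite.subset (Set.Finite.biUnion y.1.support.finite_toSet
          (fun n _ => hsupfst m n))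
        intro h hh
        rw [Function.mem_support] at hh
        by_contra hC
        apply hh
        simp only [Set.mem_iUnion, not_exists, Function.mem_support, not_not] at hC
        exact Finset.sum_eq_zero fun n hn => hC n hn
      have hsupsnd : ∀ m : ℤ, (Function.support fun h : φ.ker =>
          ((m : ℂ) * ((φ g₀ ^ m : ℂˣ) : ℂ))
            * B (σ (h : Γ) (σ g₀ (x.1 m))) (y.1 (-m))).Finite := by
        intro m
        apply (hfinH2 (σ g₀ (x.1 m)) (y.1 (-m))).subset
        intro h hh
        rw [Function.mem_support] at hh ⊢
        intro h0; apply hh; rw [h0, mul_zero]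
      have hfinfstall : (Function.support fun h : φ.ker =>
          ∑ m ∈ x.1.support, ∑ n ∈ y.1.support, Finsupp.single (m + n)
            (((φ g₀ ^ m : ℂˣ) : ℂ) • J.mkQ ⁅σ (h : Γ) (σ g₀ (x.1 m)), y.1 n⁆)).Finite := by
        apply Set.Finite.subset (Set.Finite.biUnion x.1.support.finite_toSet
          (fun m _ => hsupfstm m))
        intro h hh
        rw [Function.mem_support] at hh
        by_contra hC
        apply hh
        simp only [Set.mem_iUnion, not_exists, Function.mem_support, not_not] at hC
        exact Finset.sum_eq_zero fun m hm => hC m hm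
      have hfinsndall : (Function.support fun h : φ.ker =>
          ∑ m ∈ x.1.support, ((m : ℂ) * ((φ g₀ ^ m : ℂˣ) : ℂ))
            * B (σ (h : Γ) (σ g₀ (x.1 m))) (y.1 (-m))).Finite := by
        apply Set.Finite.subset (Set.Finite.biUnion x.1.support.finite_toSet
          (fun m _ => hsupsnd m))
        intro h hh
        rw [Function.mem_support] at hh
        by_contra hC
        apply hh
        simp only [Set.mem_iUnion, not_exists, Function.mem_support, not_not] at hC
        exact Finset.sum_eq_zero fun m hm => hC m hm
      -- left-hand side in closed form
      have hL1 : (∑ᶠ h : φ.ker, F (fg ((h : Γ) * g₀)))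
          = (∑ m ∈ x.1.support, ∑ n ∈ y.1.support, Finsupp.single (m + n)
                (((φ g₀ ^ m : ℂˣ) : ℂ) • brbar (J.mkQ (σ g₀ (x.1 m))) (J.mkQ (y.1 n))),
             ∑ m ∈ x.1.support, ((m : ℂ) * ((φ g₀ ^ m : ℂˣ) : ℂ))
                * Bbar (J.mkQ (σ g₀ (x.1 m))) (J.mkQ (y.1 (-m)))) := by
        rw [finsum_congr hterm]
        rw [finsum_prod_mk _ _ hfinfstall hfinsndall]
        refine Prod.ext ?_ ?_
        · show (∑ᶠ h : φ.ker, ∑ m ∈ x.1.support, ∑ n ∈ y.1.support, _) = _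
          rw [finsum_sum_comm x.1.support _ (fun m _ => hsupfstm m)]
          refine Finset.sum_congr rfl fun m hm => ?_
          rw [finsum_sum_comm y.1.support _ (fun n _ => hsupfst m n)]
          exact Finset.sum_congr rfl fun n hn => hkey1 (m + n) _ _ _
        · show (∑ᶠ h : φ.ker, ∑ m ∈ x.1.support, _) = _
          rw [finsum_sum_comm x.1.support _ (fun m _ => hsupsnd m)]
          exact Finset.sum_congr rfl fun m hm => hkey2 _ _ _
      -- right-hand side in closed form
      have hR : affBrF brbar Bbar
            (affActF (σbar q) (QuotientGroup.kerLift φ q) (F x)) (F y)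
          = (∑ m ∈ x.1.support, ∑ n ∈ y.1.support, Finsupp.single (m + n)
                (((φ g₀ ^ m : ℂˣ) : ℂ) • brbar (J.mkQ (σ g₀ (x.1 m))) (J.mkQ (y.1 n))),
             ∑ m ∈ x.1.support, ((m : ℂ) * ((φ g₀ ^ m : ℂˣ) : ℂ))
                * Bbar (J.mkQ (σ g₀ (x.1 m))) (J.mkQ (y.1 (-m)))) := by
        rw [affBrF_eq brbar Bbar hbr0' h0br' hB0' h0B' _ _ x.1.support y.1.support
          ((affActF_support _ _ _).trans (hFsupp x)) (hFsupp y)]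
        refine Prod.ext ?_ ?_
        · refine Finset.sum_congr rfl fun m hm => Finset.sum_congr rfl fun n hn => ?_
          rw [affActF_fst_apply, hFfst, hFfst, hkl, ← hq, hσbar, hbrbar_smul]
        · refine Finset.sum_congr rfl fun m hm => ?_
          rw [affActF_fst_apply, hFfst, hFfst, hkl, ← hq, hσbar, hBbar_smul, mul_assoc]
      rw [hL1, hR]
    -- assemble everything
    have h1 : F (∑ᶠ g : Γ, fg g) = ∑ᶠ g : Γ, F (fg g) := by
      have h := F.toAddMonoidHom.map_finsum (f := fg) hTfin
      simpa using h
    have hfinE : (Function.support fun p : (Γ ⧸ φ.ker) × φ.ker => F (fg (E p))).Finite := by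
      apply Set.Finite.subset (Set.Finite.preimage E.injective.injOn hTfin)
      intro p hp
      rw [Function.mem_support] at hp
      rw [Set.mem_preimage, Function.mem_support]
      intro h0
      exact hp (by rw [h0, map_zero])
    have h2 : (∑ᶠ g : Γ, F (fg g)) = ∑ᶠ p : (Γ ⧸ φ.ker) × φ.ker, F (fg (E p)) :=
      (finsum_comp_equiv E).symm
    have h3 : (∑ᶠ p : (Γ ⧸ φ.ker) × φ.ker, F (fg (E p)))
        = ∑ᶠ (q : Γ ⧸ φ.ker) (h : φ.ker), F (fg ((h : Γ) * q.out)) :=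
      finsum_curry _ hfinE
    rw [h1, h2, h3, finsum_congr key]
    exact finsum_congr fun q => by rw [hF, hF]
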